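/- Let 0 < r < ∞ and let (t_n)_{n≥1} be a decreasing sequence of positive reals with t_n → 0 that belongs to ℓ^{r,∞}(ℕ). Then the Minkowski dimension of {t_n : n ≥ 1} is at most r/(1+r). More generally, for any real-valued sequence (a_n)_{n≥1} ∈ ℓ^{r,∞}(ℕ), the Minkowski dimension of {a_n : n ≥ 1} is at most r/(1+r). -/

import Mathlib

open MeasureTheory

/-- The `δ`-entropy number `N(E,δ) = #{k ∈ ℕ : E ∩ [kδ,(k+1)δ] ≠ ∅}`. -/
noncomputable def entropyNum (E : Set ℝ) (δ : ℝ) : ℕ :=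
  Set.ncard {k : ℕ | (E ∩ Set.Icc (k * δ) ((k + 1) * δ)).Nonempty}

/-- The (upper) Minkowski dimension of a bounded set `E ⊆ ℝ`. -/
noncomputable def minkowskiDim (E : Set ℝ) : ℝ :=
  sInf {a : ℝ | 0 < a ∧ ∃ C : ℝ, 0 < C ∧
    ∀ δ ∈ Set.Ioc (0 : ℝ) 1, (entropyNum E δ : ℝ) ≤ C * δ ^ (-a)}

/-- A sequence belongs to `ℓ^{r,∞}(ℕ)` if `#{n : |t_n| ≥ δ} ≤ N δ^{-r}` for all `δ > 0`. -/
def memLorentz (r : ℝ) (t : ℕ → ℝ) : Prop :=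
  ∃ N : ℝ, 0 < N ∧ ∀ δ : ℝ, 0 < δ →
    Set.encard {n : ℕ | δ ≤ |t n|} ≤ ENNReal.ofReal (N * δ ^ (-r))

lemma aux_main (r : ℝ) (hr : 0 < r) (a : ℕ → ℝ) (h : memLorentz r a) :
    minkowskiDim (Set.range a) ≤ r / (1 + r) := by
  obtain ⟨N, hN, hb⟩ := h
  have h1r : (0:ℝ) < 1 + r := by linarith
  have h1r' : (1:ℝ) + r ≠ 0 := h1r.ne'
  rw [minkowskiDim]
  have hbdd : BddBelow {a_1 : ℝ | 0 < a_1 ∧ ∃ C : ℝ, 0 < C ∧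
      ∀ δ ∈ Set.Ioc (0 : ℝ) 1, (entropyNum (Set.range a) δ : ℝ) ≤ C * δ ^ (-a_1)} :=
    ⟨0, fun x hx => hx.1.le⟩
  apply csInf_le hbdd
  refine ⟨by positivity, 2*N+2, by positivity, ?_⟩
  rintro δ ⟨hδ0, hδ1⟩
  set s : ℝ := r / (1+r) with hs
  set η : ℝ := δ ^ ((1:ℝ)/(1+r)) with hη
  have hηpos : 0 < η := Real.rpow_pos_of_pos hδ0 _
  set A : Set ℕ := {n | η ≤ |a n|} with hA
  have hAcard : A.encard ≤ ENNReal.ofReal (N * η ^ (-r)) := hb η hηpos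
  have hAfin : A.Finite := by
    by_contra hinf
    rw [Set.Infinite.encard_eq hinf] at hAcard
    simp at hAcard
  have hAncard : (A.ncard : ℝ) ≤ N * η ^ (-r) := by
    have h2 : ENNReal.ofReal ((A.ncard : ℝ)) ≤ ENNReal.ofReal (N * η ^ (-r)) := by
      rw [ENNReal.ofReal_natCast]
      calc (A.ncard : ENNReal) = (A.encard : ENNReal) := by
            rw [← hAfin.cast_ncard_eq]; norm_cast
        _ ≤ _ := hAcard
    have hx : (0:ℝ) ≤ N * η ^ (-r) := by positivity
    exact (ENNReal.ofReal_le_ofReal_iff hx).mp h2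
  set M := ⌈η/δ⌉₊ with hM
  set K := {k : ℕ | ((Set.range a) ∩ Set.Icc (k*δ) ((k+1)*δ)).Nonempty} with hK
  set g : ℕ → ℕ := fun n => (⌊a n / δ⌋).toNat with hg
  set g' : ℕ → ℕ := fun n => (⌊a n / δ⌋ - 1).toNat with hg'
  have hsub : K ⊆ (↑(Finset.range M) : Set ℕ) ∪ (g '' A ∪ g' '' A) := by
    rintro k ⟨x, ⟨n, rfl⟩, hx1, hx2⟩
    by_cases hk : (k:ℝ) * δ < η
    · left
      simp only [Finset.coe_range, Set.mem_Iio]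
      exact Nat.lt_ceil.mpr ((lt_div_iff₀ hδ0).mpr hk)
    · right
      push_neg at hk
      have hxη : η ≤ a n := le_trans hk hx1
      have hnA : n ∈ A := le_trans hxη (le_abs_self _)
      have h1 : (k:ℤ) ≤ ⌊a n / δ⌋ := Int.le_floor.mpr (by push_cast; exact (le_div_iff₀ hδ0).mpr hx1)
      have h2 : ⌊a n / δ⌋ ≤ (k:ℤ) + 1 := by
        have hf := Int.floor_le (a n / δ)
        have hx2' : a n / δ ≤ (k:ℝ)+1 := (div_le_iff₀ hδ0).mpr hx2
        exact_mod_cast le_trans hf hx2'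
      rcases eq_or_lt_of_le h1 with heq | hlt
      · left; exact ⟨n, hnA, by simp [hg, ← heq]⟩
      · right
        refine ⟨n, hnA, ?_⟩
        have heq2 : ⌊a n / δ⌋ = (k:ℤ) + 1 := le_antisymm h2 hlt
        simp [hg', heq2]
  have hfin : ((↑(Finset.range M) : Set ℕ) ∪ (g '' A ∪ g' '' A)).Finite :=
    (Finset.range M).finite_toSet.union ((hAfin.image _).union (hAfin.image _))
  have hcount : entropyNum (Set.range a) δ ≤ M + (A.ncard + A.ncard) := by
    have c1 : entropyNum (Set.range a) δ = K.ncard := rfl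
    rw [c1]
    calc K.ncard ≤ ((↑(Finset.range M) : Set ℕ) ∪ (g '' A ∪ g' '' A)).ncard :=
          Set.ncard_le_ncard hsub hfin
      _ ≤ (↑(Finset.range M) : Set ℕ).ncard + (g '' A ∪ g' '' A).ncard :=
          Set.ncard_union_le _ _
      _ ≤ M + ((g '' A).ncard + (g' '' A).ncard) := by
          rw [Set.ncard_coe_finset, Finset.card_range]
          exact Nat.add_le_add_left (Set.ncard_union_le _ _) _
      _ ≤ M + (A.ncard + A.ncard) := by
          exact Nat.add_le_add_left
            (Nat.add_le_add (Set.ncard_image_le hAfin) (Set.ncard_image_le hAfin)) _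
  -- rpow algebra
  have e1 : η / δ = δ ^ (-s) := by
    calc η/δ = δ^((1:ℝ)/(1+r)) / δ^(1:ℝ) := by rw [Real.rpow_one]
      _ = δ^((1:ℝ)/(1+r) - 1) := (Real.rpow_sub hδ0 _ _).symm
      _ = δ^(-s) := by rw [hs]; congr 1; field_simp; ring
  have e2 : η ^ (-r) = δ ^ (-s) := by
    rw [hη, ← Real.rpow_mul hδ0.le]
    rw [hs]; congr 1; field_simp
  have e3 : (1:ℝ) ≤ δ ^ (-s) := by
    apply Real.one_le_rpow_of_pos_of_le_one_of_nonpos hδ0 hδ1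
    rw [hs]; rw [neg_nonpos]; positivity
  have hMle : (M:ℝ) ≤ η/δ + 1 := by
    rw [hM]
    have := Nat.ceil_lt_add_one (by positivity : (0:ℝ) ≤ η/δ)
    linarith
  have hfinal : (entropyNum (Set.range a) δ : ℝ) ≤ (M:ℝ) + 2 * (A.ncard : ℝ) := by
    have := hcount
    push_cast
    exact_mod_cast by push_cast at this ⊢; linarith
  calc (entropyNum (Set.range a) δ : ℝ) ≤ (M:ℝ) + 2 * (A.ncard : ℝ) := hfinal
    _ ≤ (η/δ + 1) + 2 * (N * η ^ (-r)) := by linarith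
    _ = δ^(-s) + 1 + 2*N*δ^(-s) := by rw [e1, e2]; ring
    _ ≤ (2*N+2) * δ^(-s) := by nlinarith

theorem stmt6 (r : ℝ) (hr : 0 < r) (t : ℕ → ℝ) (hpos : ∀ n, 0 < t n)
    (hanti : Antitone t) (hlim : Filter.Tendsto t Filter.atTop (nhds 0))
    (hlor : memLorentz r t) :
    minkowskiDim (Set.range t) ≤ r / (1 + r) ∧
      ∀ a : ℕ → ℝ, memLorentz r a → minkowskiDim (Set.range a) ≤ r / (1 + r) := by
  exact ⟨aux_main r hr t hlor, fun a ha => aux_main r hr a ha⟩
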